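/- arXiv:2111.04049 — 2 statements merged into one kernel-verified Lean document; each statement's English description precedes it below -/
import Mathlib

section
/- Let q ≥ 2 be an integer. With log_∘ the ∘-logarithm for the P_{[0,q]}-convolution, the geometric series g = Σ_{n≥0} x^n satisfies log_∘ g = Σ_{k≥0} Σ_{n=1}^{q−1} x^{n·q^k}/n; that is, [x^N] log_∘ g = 1/n if N = n·q^k with 1 ≤ n ≤ q−1 and k ≥ 0, and [x^N] log_∘ g = 0 otherwise. -/
open PowerSeries Finset

open scoped Classical in
/-- The `(N,M)` entry of the generalized Sierpinski matrix `P_{[0,q]}`. -/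
noncomputable def Wq (q N M : ℕ) : ℝ :=
  if ∀ r : ℕ, 1 ≤ r → M % q ^ r ≤ N % q ^ r then 1 else 0

/-- Convolution of formal power series with respect to a weight `w`. -/
noncomputable def conv (w : ℕ → ℕ → ℝ) (a b : PowerSeries ℝ) : PowerSeries ℝ :=
  PowerSeries.mk fun n => ∑ m ∈ Finset.range (n + 1), w n m * coeff m a * coeff (n - m) b

/-- Iterated `∘`-power `f^{(k)}` with respect to a weight `w`. -/
noncomputable def convPow (w : ℕ → ℕ → ℝ) (f : PowerSeries ℝ) : ℕ → PowerSeries ℝ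
  | 0 => 1
  | k + 1 => conv w f (convPow w f k)

/-- The `∘`-logarithm `log_∘ f = Σ_{n≥1} ((−1)^{n−1}/n)·(f−1)^{(n)}`. -/
noncomputable def convLog (w : ℕ → ℕ → ℝ) (f : PowerSeries ℝ) : PowerSeries ℝ :=
  PowerSeries.mk fun N =>
    ∑ n ∈ Finset.Icc 1 N, ((-1 : ℝ) ^ (n - 1) / n) * coeff N (convPow w (f - 1) n)

open Finset

variable {q : ℕ}

/-- The i-th base-q digit of N. -/
def dg (q N i : ℕ) : ℕ := N / q ^ i % q

lemma dg_lt (hq : 2 ≤ q) (N i : ℕ) : dg q N i < q :=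
  Nat.mod_lt _ (by omega)

lemma dg_mem (N i : ℕ) (h : dg q N i ≠ 0) : i ∈ Finset.range (N+1) := by
  simp only [Finset.mem_range]
  by_contra hi
  push_neg at hi
  apply h
  match q with
  | 0 =>
    have : (0:ℕ) ^ i = 0 := by
      apply Nat.zero_pow; omega
    simp [dg, this]
  | 1 => simp [dg, Nat.mod_one]
  | (q+2) =>
    have : N < (q+2) ^ i := lt_of_le_of_lt (by omega) (Nat.lt_pow_self (by omega) : i < (q+2) ^ i)
    simp [dg, Nat.div_eq_of_lt this]

/-- digit vector of N as a finsupp -/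
noncomputable def dvec (q N : ℕ) : ℕ →₀ ℕ :=
  Finsupp.onFinset (Finset.range (N+1)) (dg q N) (dg_mem N)

@[simp] lemma dvec_apply (N i : ℕ) : dvec q N i = dg q N i := rfl

/-- value of a digit vector -/
def sval (q : ℕ) (v : ℕ →₀ ℕ) : ℕ := v.sum fun i c => c * q ^ i

/-- weight (digit sum) -/
def wt (v : ℕ →₀ ℕ) : ℕ := v.sum fun _ c => c

lemma sum_dg_eq_mod (hq : 2 ≤ q) (N : ℕ) : ∀ K, ∑ i ∈ range K, dg q N i * q ^ i = N % q ^ K := by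
  intro K; induction K with
  | zero => simp [Nat.mod_one]
  | succ K ih =>
    rw [Finset.sum_range_succ, ih]
    have h1 : N % (q ^ K * q) / q ^ K = N / q ^ K % q := Nat.mod_mul_right_div_self N (q^K) q
    have h2 : N % (q ^ K * q) % q ^ K = N % q ^ K := Nat.mod_mod_of_dvd N ⟨q, rfl⟩
    have h3 := Nat.div_add_mod (N % (q ^ K * q)) (q ^ K)
    rw [h1] at h3
    have h4 : q ^ K * (N / q ^ K % q) = (N / q ^ K % q) * q ^ K := Nat.mul_comm _ _
    rw [pow_succ, dg]
    omega

lemma sval_finset (hq : 2 ≤ q) (v : ℕ →₀ ℕ) {K : ℕ} (hK : v.support ⊆ range K) :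
    sval q v = ∑ i ∈ range K, v i * q ^ i := by
  rw [sval, Finsupp.sum_of_support_subset v hK _ (by intros; simp)]

lemma sval_dvec (hq : 2 ≤ q) (N : ℕ) : sval q (dvec q N) = N := by
  rw [sval_finset hq (dvec q N) (N+1 |> fun K => (Finsupp.support_onFinset_subset : (dvec q N).support ⊆ range (N+1)))]
  have := sum_dg_eq_mod hq N (N+1)
  have hN : N < q ^ (N+1) :=
    lt_of_lt_of_le (Nat.lt_pow_self (by omega) : N < q ^ N) (Nat.pow_le_pow_right (by omega) (by omega))
  simp only [dvec_apply]
  rw [this, Nat.mod_eq_of_lt hN]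

lemma sum_lt_pow (hq : 2 ≤ q) (g : ℕ → ℕ) (hg : ∀ j, g j < q) :
    ∀ i, ∑ j ∈ range i, g j * q ^ j < q ^ i := by
  intro i; induction i with
  | zero => simp
  | succ i ih =>
    rw [Finset.sum_range_succ, pow_succ]
    have h1 : g i ≤ q - 1 := by have := hg i; omega
    have h2 : g i * q ^ i ≤ (q-1) * q ^ i := Nat.mul_le_mul_right _ h1
    have h3 : (q-1) * q ^ i + q ^ i = q ^ i * q := by
      have : (q - 1) + 1 = q := by omega
      calc (q-1) * q ^ i + q ^ i = ((q-1)+1) * q ^ i := by ring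
        _ = q * q ^ i := by rw [this]
        _ = q ^ i * q := by ring
    omega

lemma digit_extract (hq : 2 ≤ q) (g : ℕ → ℕ) (hg : ∀ j, g j < q) {K i : ℕ} (hiK : i < K) :
    dg q (∑ j ∈ range K, g j * q ^ j) i = g i := by
  have hsplit : ∑ j ∈ range (i+1), g j * q ^ j + ∑ j ∈ Ico (i+1) K, g j * q ^ j
      = ∑ j ∈ range K, g j * q ^ j := Finset.sum_range_add_sum_Ico _ (by omega)
  have hdvd : (q ^ (i+1) : ℕ) ∣ ∑ j ∈ Ico (i+1) K, g j * q ^ j := by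
    apply Finset.dvd_sum
    intro j hj
    rw [Finset.mem_Ico] at hj
    exact Dvd.dvd.mul_left (pow_dvd_pow q hj.1) _
  obtain ⟨B, hB⟩ := hdvd
  have hA : ∑ j ∈ range i, g j * q ^ j < q ^ i := sum_lt_pow hq g hg i
  have hs : ∑ j ∈ range (i+1), g j * q ^ j = ∑ j ∈ range i, g j * q ^ j + g i * q ^ i :=
    Finset.sum_range_succ _ _
  set A := ∑ j ∈ range i, g j * q ^ j with hAdef
  have key : ∑ j ∈ range K, g j * q ^ j = A + (g i + q * B) * q ^ i := by
    rw [← hsplit, hs, hB, pow_succ]; ring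
  rw [dg, key]
  rw [Nat.add_mul_div_right _ _ (by positivity : 0 < q ^ i)]
  rw [Nat.div_eq_of_lt hA]
  simp [Nat.mul_add_mod, Nat.mod_eq_of_lt (hg i)]

lemma dvec_sval (hq : 2 ≤ q) (v : ℕ →₀ ℕ) (hv : ∀ i, v i < q) : dvec q (sval q v) = v := by
  ext i
  set K := max (i+1) (sval q v + 1) with hK
  have hsup : v.support ⊆ range K := by
    intro j hj
    rw [Finset.mem_range]
    -- j in support means v j ≥ 1 so q^j ≤ v j * q^j ≤ sval
    have h1 : v j ≠ 0 := Finsupp.mem_support_iff.mp hj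
    have h2 : q ^ j ≤ v j * q ^ j := Nat.le_mul_of_pos_left _ (by omega)
    have h3 : v j * q ^ j ≤ sval q v := by
      rw [sval, Finsupp.sum]
      exact Finset.single_le_sum (f := fun x => v x * q ^ x) (by intros; positivity) hj
    have h4 : j < q ^ j := (Nat.lt_pow_self (by omega) : j < q ^ j)
    omega
  have := sval_finset hq v hsup
  rw [dvec_apply, this, digit_extract hq _ hv (by omega)]

lemma sval_add (u v : ℕ →₀ ℕ) : sval q (u + v) = sval q u + sval q v := by
  simp only [sval]
  rw [Finsupp.sum_add_index' (by intros; simp) (by intros; exact add_mul _ _ _)]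

lemma wt_add (u v : ℕ →₀ ℕ) : wt (u + v) = wt u + wt v := by
  simp only [wt]
  rw [Finsupp.sum_add_index' (by intros; simp) (by intros; simp)]

lemma wt_eq_zero {v : ℕ →₀ ℕ} (h : wt v = 0) : v = 0 := by
  ext i
  by_contra hi
  have hmem : i ∈ v.support := Finsupp.mem_support_iff.mpr (by simpa using hi)
  have : v i ≤ wt v := by
    rw [wt, Finsupp.sum]
    exact Finset.single_le_sum (f := fun x => v x) (by intros; positivity) hmem
  simp at hi; omega

lemma sval_eq_zero (hq : 2 ≤ q) {v : ℕ →₀ ℕ} (h : sval q v = 0) : v = 0 := by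
  ext i
  by_contra hi
  have hmem : i ∈ v.support := Finsupp.mem_support_iff.mpr (by simpa using hi)
  have : v i * q ^ i ≤ sval q v := by
    rw [sval, Finsupp.sum]
    exact Finset.single_le_sum (f := fun x => v x * q ^ x) (by intros; positivity) hmem
  simp at hi
  have : 0 < v i * q ^ i := by positivity
  omega

lemma wt_le_sval (hq : 2 ≤ q) (v : ℕ →₀ ℕ) : wt v ≤ sval q v := by
  rw [wt, sval, Finsupp.sum, Finsupp.sum]
  apply Finset.sum_le_sum
  intro i _
  exact Nat.le_mul_of_pos_right _ (by positivity)

/-- The dominance condition appearing in `Wq`. -/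
def Cq (q N m : ℕ) : Prop := ∀ r : ℕ, 1 ≤ r → m % q ^ r ≤ N % q ^ r

lemma Cq_le (hq : 2 ≤ q) {N m : ℕ} (h : Cq q N m) : m ≤ N := by
  set r := m + N + 1 with hr
  have hm : m < q ^ r := lt_of_le_of_lt (by omega) (Nat.lt_pow_self (by omega) : r < q ^ r)
  have hN : N < q ^ r := lt_of_le_of_lt (by omega) (Nat.lt_pow_self (by omega) : r < q ^ r)
  have := h r (by omega)
  rwa [Nat.mod_eq_of_lt hm, Nat.mod_eq_of_lt hN] at this

lemma mod_sub_abstract {Qr N m : ℕ} (hQ : 0 < Qr) (hmod : m % Qr ≤ N % Qr) (hle : m ≤ N) :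
    (N - m) % Qr = N % Qr - m % Qr := by
  have hN := Nat.div_add_mod N Qr
  have hm := Nat.div_add_mod m Qr
  have hsN : N % Qr < Qr := Nat.mod_lt _ hQ
  have hsm : m % Qr < Qr := Nat.mod_lt _ hQ
  have hdiv : m / Qr ≤ N / Qr := by
    by_contra hc
    push_neg at hc
    have h5 : Qr * (N / Qr + 1) ≤ Qr * (m / Qr) := Nat.mul_le_mul_left Qr (by omega)
    have h6 : Qr * (N / Qr + 1) = Qr * (N / Qr) + Qr := by ring
    omega
  obtain ⟨c, hc⟩ : ∃ c, N / Qr = m / Qr + c := ⟨N / Qr - m / Qr, by omega⟩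
  have h1 : Qr * (m / Qr + c) = Qr * (m / Qr) + Qr * c := Nat.mul_add _ _ _
  rw [hc] at hN
  have hNm : N - m = (N % Qr - m % Qr) + c * Qr := by
    have h7 : Qr * c = c * Qr := Nat.mul_comm _ _
    omega
  rw [hNm, Nat.add_mul_mod_self_right]
  exact Nat.mod_eq_of_lt (by omega)

lemma Cq_mod_sub (hq : 2 ≤ q) {N m : ℕ} (h : Cq q N m) (r : ℕ) :
    (N - m) % q ^ r = N % q ^ r - m % q ^ r := by
  rcases Nat.eq_zero_or_pos r with hr | hr
  · subst hr; simp [Nat.mod_one]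
  exact mod_sub_abstract (by positivity) (h r hr) (Cq_le hq h)

lemma dg_eq_mod (N i : ℕ) : dg q N i = N % q ^ (i+1) / q ^ i := by
  rw [dg, pow_succ, Nat.mod_mul_right_div_self]

/-- split `N % q^(i+1)` into digit and lower part -/
lemma split_mod (hq : 2 ≤ q) (N i : ℕ) :
    N % q ^ (i+1) = q ^ i * dg q N i + N % q ^ i := by
  have h1 : (q:ℕ) ^ (i+1) = q ^ i * q := pow_succ _ _
  have h2 : N % q ^ (i+1) % q ^ i = N % q ^ i := by
    rw [h1]; exact Nat.mod_mod_of_dvd N ⟨q, rfl⟩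
  have h3 := Nat.div_add_mod (N % q ^ (i+1)) (q ^ i)
  rw [dg_eq_mod]
  omega

lemma dg_arith {B a b c a' b' : ℕ} (hB : 0 < B) (ha' : a' < B) (hb' : b' ≤ a')
    (hm1 : B * b + b' ≤ B * a + a')
    (hC : B * c + (a' - b') = (B * a + a') - (B * b + b')) :
    b ≤ a ∧ c = a - b := by
  have hba : b ≤ a := by
    rcases le_or_gt b a with hx | hx
    · exact hx
    · have h1 : B * (a+1) ≤ B * b := Nat.mul_le_mul_left B hx
      have h2 : B * (a+1) = B * a + B := by ring
      omega
  obtain ⟨e, he⟩ : ∃ e, a = b + e := ⟨a - b, by omega⟩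
  have h1 : B * (b+e) = B * b + B * e := by ring
  rw [he, h1] at hC
  have h2 : B * c = B * e := by omega
  have h3 : c = e := Nat.eq_of_mul_eq_mul_left hB h2
  omega

lemma dg_facts (hq : 2 ≤ q) {N m : ℕ} (h : Cq q N m) (i : ℕ) :
    dg q m i ≤ dg q N i ∧ dg q (N - m) i = dg q N i - dg q m i := by
  have hQpos : (0:ℕ) < q ^ i := by positivity
  have e1 := split_mod hq N i
  have e2 := split_mod hq m i
  have hs0 : N % q ^ i < q ^ i := Nat.mod_lt _ hQpos
  have hm0 : m % q ^ i ≤ N % q ^ i := by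
    rcases Nat.eq_zero_or_pos i with h0 | h0
    · subst h0; simp [Nat.mod_one]
    · exact h i h0
  have hm1 : q ^ i * dg q m i + m % q ^ i ≤ q ^ i * dg q N i + N % q ^ i := by
    rw [← e1, ← e2]; exact h (i+1) (by omega)
  have s1 : (N - m) % q ^ (i+1) = N % q ^ (i+1) - m % q ^ (i+1) := Cq_mod_sub hq h (i+1)
  have s0 : (N - m) % q ^ i = N % q ^ i - m % q ^ i := Cq_mod_sub hq h i
  have hC : q ^ i * dg q (N-m) i + (N % q ^ i - m % q ^ i)
      = (q ^ i * dg q N i + N % q ^ i) - (q ^ i * dg q m i + m % q ^ i) := by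
    rw [← s0, ← split_mod hq (N-m) i, s1, e1, e2]
  exact dg_arith hQpos hs0 hm0 hm1 hC

lemma Cq_of_dg_le (hq : 2 ≤ q) {N m : ℕ} (h : ∀ i, dg q m i ≤ dg q N i) : Cq q N m := by
  intro r _
  rw [← sum_dg_eq_mod hq N r, ← sum_dg_eq_mod hq m r]
  exact Finset.sum_le_sum fun i _ => Nat.mul_le_mul_right _ (h i)

lemma dvec_add_of_Cq (hq : 2 ≤ q) {N m : ℕ} (h : Cq q N m) :
    dvec q m + dvec q (N - m) = dvec q N := by
  ext i
  have := dg_facts hq h i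
  simp only [Finsupp.add_apply, dvec_apply]
  omega

open scoped Classical

/-- truncated multivariate series with coefficient 1 on nonzero small vectors -/
noncomputable def Pser (q : ℕ) : MvPowerSeries ℕ ℝ :=
  fun v => if v ≠ 0 ∧ (∀ i, v i < q) then 1 else 0

/-- the Möbius-like inverse series -/
noncomputable def Qser : MvPowerSeries ℕ ℝ :=
  fun v => if (∀ i, v i ≤ 1) then (-1 : ℝ) ^ (wt v) else 0

/-- the weight derivation -/
noncomputable def Dmv (f : MvPowerSeries ℕ ℝ) : MvPowerSeries ℕ ℝ :=
  fun v => (wt v : ℝ) * f v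

lemma coeff_eq (f : MvPowerSeries ℕ ℝ) (v : ℕ →₀ ℕ) : MvPowerSeries.coeff v f = f v := rfl

lemma coeff_Dmv (f : MvPowerSeries ℕ ℝ) (v : ℕ →₀ ℕ) :
    MvPowerSeries.coeff v (Dmv f) = (wt v : ℝ) * MvPowerSeries.coeff v f := rfl

lemma Dmv_mul (f g : MvPowerSeries ℕ ℝ) : Dmv (f * g) = Dmv f * g + f * Dmv g := by
  apply MvPowerSeries.ext
  intro v
  rw [map_add, coeff_Dmv, MvPowerSeries.coeff_mul, MvPowerSeries.coeff_mul,
    MvPowerSeries.coeff_mul, Finset.mul_sum, ← Finset.sum_add_distrib]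
  apply Finset.sum_congr rfl
  intro p hp
  rw [Finset.HasAntidiagonal.mem_antidiagonal] at hp
  have hw : wt v = wt p.1 + wt p.2 := by rw [← hp, wt_add]
  rw [coeff_Dmv, coeff_Dmv, hw]
  push_cast
  ring

lemma Dmv_pow (f : MvPowerSeries ℕ ℝ) : ∀ n : ℕ, Dmv (f ^ (n+1)) = ((n+1 : ℕ) : ℝ) • (Dmv f * f ^ n) := by
  intro n; induction n with
  | zero => simp [pow_one]
  | succ n ih =>
    have : f ^ (n+2) = f * f ^ (n+1) := by ring
    rw [this, Dmv_mul, ih]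
    have h2 : f * (((n+1:ℕ):ℝ) • (Dmv f * f ^ n)) = ((n+1:ℕ):ℝ) • (Dmv f * f ^ (n+1)) := by
      rw [mul_smul_comm]; ring_nf
    rw [h2]
    have h3 : Dmv f * f ^ (n+1) + ((n+1:ℕ):ℝ) • (Dmv f * f ^ (n+1))
        = ((n+2:ℕ):ℝ) • (Dmv f * f ^ (n+1)) := by
      calc Dmv f * f ^ (n+1) + ((n+1:ℕ):ℝ) • (Dmv f * f ^ (n+1))
          = (1:ℝ) • (Dmv f * f ^ (n+1)) + ((n+1:ℕ):ℝ) • (Dmv f * f ^ (n+1)) := by rw [one_smul]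
        _ = ((1:ℝ) + ((n+1:ℕ):ℝ)) • (Dmv f * f ^ (n+1)) := (add_smul _ _ _).symm
        _ = ((n+2:ℕ):ℝ) • (Dmv f * f ^ (n+1)) := by push_cast; ring_nf
    rw [h3]

/-- order vanishing: if coefficients vanish below weight a resp. b, the product vanishes below a+b -/
lemma mul_vanish {f g : MvPowerSeries ℕ ℝ} {a b : ℕ}
    (hf : ∀ u, wt u < a → f u = 0) (hg : ∀ w, wt w < b → g w = 0) :
    ∀ v, wt v < a + b → (f * g) v = 0 := by
  intro v hv
  show MvPowerSeries.coeff v (f * g) = 0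
  rw [MvPowerSeries.coeff_mul]
  apply Finset.sum_eq_zero
  intro p hp
  rw [Finset.HasAntidiagonal.mem_antidiagonal] at hp
  have hw : wt v = wt p.1 + wt p.2 := by rw [← hp, wt_add]
  simp only [coeff_eq]
  rcases lt_or_ge (wt p.1) a with h | h
  · rw [hf _ h, zero_mul]
  · rw [hg _ (by omega), mul_zero]

lemma pow_vanish {f : MvPowerSeries ℕ ℝ} (hf : ∀ u, wt u < 1 → f u = 0) :
    ∀ n v, wt v < n → (f ^ n) v = 0 := by
  intro n
  induction n with
  | zero => intro v hv; omega
  | succ n ih =>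
    intro v hv
    rw [pow_succ]
    exact mul_vanish ih hf v (by omega)


lemma Wq_eq_one (hq : 2 ≤ q) {N m : ℕ} (h : Cq q N m) : Wq q N m = 1 := if_pos h

lemma Wq_eq_zero (hq : 2 ≤ q) {N m : ℕ} (h : ¬ Cq q N m) : Wq q N m = 0 := if_neg h

/-- key bridge: multiplying by a "truncated" series and evaluating at a digit vector
is the `Wq`-weighted convolution. -/
lemma bridge (hq : 2 ≤ q) (f : ℕ → ℝ) (A G : MvPowerSeries ℕ ℝ)
    (hA : ∀ v : ℕ →₀ ℕ, (∀ i, v i < q) → A v = f (sval q v))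
    (hA' : ∀ v : ℕ →₀ ℕ, ¬ (∀ i, v i < q) → A v = 0)
    (N : ℕ) :
    (A * G) (dvec q N) = ∑ m ∈ Finset.range (N+1), Wq q N m * f m * G (dvec q (N - m)) := by
  have hgood : ∀ i, dvec q N i < q := fun i => dg_lt hq N i
  -- kill the terms where Wq vanishes
  rw [← Finset.sum_filter_add_sum_filter_not (Finset.range (N+1)) (fun m => Cq q N m)]
  have hzero : ∑ m ∈ (Finset.range (N+1)).filter (fun m => ¬ Cq q N m),
      Wq q N m * f m * G (dvec q (N - m)) = 0 := by
    apply Finset.sum_eq_zero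
    intro m hm
    rw [Finset.mem_filter] at hm
    rw [Wq_eq_zero hq hm.2, zero_mul, zero_mul]
  rw [hzero, add_zero]
  show MvPowerSeries.coeff (dvec q N) (A * G) = _
  rw [MvPowerSeries.coeff_mul]
  apply Finset.sum_nbij' (i := fun p => sval q p.1)
    (j := fun m => (dvec q m, dvec q (N - m)))
  · -- maps into filter set
    intro p hp
    rw [Finset.HasAntidiagonal.mem_antidiagonal] at hp
    have hple : ∀ i, p.1 i < q := by
      intro i
      have : p.1 i + p.2 i = dvec q N i := by rw [← Finsupp.add_apply, hp]
      have := hgood i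
      omega
    have hCq : Cq q N (sval q p.1) := by
      apply Cq_of_dg_le hq
      intro i
      have h1 : dg q (sval q p.1) i = p.1 i := by
        rw [← dvec_apply, dvec_sval hq p.1 hple]
      have h2 : p.1 i + p.2 i = dvec q N i := by rw [← Finsupp.add_apply, hp]
      rw [h1]
      have := hgood i
      simp only [dvec_apply] at h2
      omega
    rw [Finset.mem_filter, Finset.mem_range]
    refine ⟨?_, hCq⟩
    have := Cq_le hq hCq
    omega
  · -- reverse map into antidiagonal
    intro m hm
    rw [Finset.mem_filter] at hm
    rw [Finset.HasAntidiagonal.mem_antidiagonal]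
    exact dvec_add_of_Cq hq hm.2
  · -- left inverse
    intro p hp
    rw [Finset.HasAntidiagonal.mem_antidiagonal] at hp
    have hple : ∀ i, p.1 i < q := by
      intro i
      have : p.1 i + p.2 i = dvec q N i := by rw [← Finsupp.add_apply, hp]
      have := hgood i
      omega
    have hp2le : ∀ i, p.2 i < q := by
      intro i
      have : p.1 i + p.2 i = dvec q N i := by rw [← Finsupp.add_apply, hp]
      have := hgood i
      omega
    have hv1 : dvec q (sval q p.1) = p.1 := dvec_sval hq p.1 hple
    have hNval : sval q p.1 + sval q p.2 = N := by
      rw [← sval_add, hp, sval_dvec hq]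
    have hv2 : dvec q (N - sval q p.1) = p.2 := by
      have : N - sval q p.1 = sval q p.2 := by omega
      rw [this, dvec_sval hq p.2 hp2le]
    exact Prod.ext hv1 hv2
  · -- right inverse
    intro m hm
    rw [Finset.mem_filter] at hm
    exact sval_dvec hq m
  · -- values agree
    intro p hp
    rw [Finset.HasAntidiagonal.mem_antidiagonal] at hp
    have hple : ∀ i, p.1 i < q := by
      intro i
      have : p.1 i + p.2 i = dvec q N i := by rw [← Finsupp.add_apply, hp]
      have := hgood i
      omega
    have hp2le : ∀ i, p.2 i < q := by
      intro i
      have : p.1 i + p.2 i = dvec q N i := by rw [← Finsupp.add_apply, hp]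
      have := hgood i
      omega
    have hCq : Cq q N (sval q p.1) := by
      apply Cq_of_dg_le hq
      intro i
      have h1 : dg q (sval q p.1) i = p.1 i := by
        rw [← dvec_apply, dvec_sval hq p.1 hple]
      have h2 : p.1 i + p.2 i = dvec q N i := by rw [← Finsupp.add_apply, hp]
      rw [h1]
      simp only [dvec_apply] at h2
      have := hgood i
      omega
    have hNval : sval q p.1 + sval q p.2 = N := by
      rw [← sval_add, hp, sval_dvec hq]
    have hv2 : dvec q (N - sval q p.1) = p.2 := by
      have : N - sval q p.1 = sval q p.2 := by omega
      rw [this, dvec_sval hq p.2 hp2le]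
    rw [Wq_eq_one hq hCq, one_mul, hv2]
    simp only [coeff_eq]
    rw [hA p.1 hple]


lemma dvec_eq_zero_iff (hq : 2 ≤ q) (N : ℕ) : dvec q N = 0 ↔ N = 0 := by
  constructor
  · intro h
    have := sval_dvec hq N
    rw [h] at this
    simpa [sval, Finsupp.sum_zero_index] using this.symm
  · intro h; subst h
    ext i
    simp [dvec_apply, dg]

lemma coeff_geomF (m : ℕ) :
    PowerSeries.coeff m ((PowerSeries.mk fun _ => (1:ℝ)) - 1) = if m = 0 then 0 else 1 := by
  rw [map_sub, PowerSeries.coeff_mk, PowerSeries.coeff_one]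
  split <;> simp

lemma Pser_spec (hq : 2 ≤ q) (v : ℕ →₀ ℕ) (hv : ∀ i, v i < q) :
    Pser q v = if sval q v = 0 then 0 else 1 := by
  rw [Pser]
  by_cases h0 : v = 0
  · subst h0
    simp [sval, Finsupp.sum_zero_index]
  · have : sval q v ≠ 0 := fun hs => h0 (sval_eq_zero hq hs)
    simp [h0, hv, this]

lemma powEq (hq : 2 ≤ q) : ∀ n N, (Pser q ^ n) (dvec q N)
    = PowerSeries.coeff N (convPow (Wq q) ((PowerSeries.mk fun _ => (1:ℝ)) - 1) n) := by
  intro n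
  induction n with
  | zero =>
    intro N
    show MvPowerSeries.coeff (dvec q N) 1 = PowerSeries.coeff N 1
    rw [MvPowerSeries.coeff_one, PowerSeries.coeff_one]
    simp only [dvec_eq_zero_iff hq]
  | succ n ih =>
    intro N
    have h1 : Pser q ^ (n+1) = Pser q * Pser q ^ n := by ring
    rw [h1]
    rw [bridge hq (fun m => if m = 0 then 0 else 1) (Pser q) (Pser q ^ n)
      (fun v hv => Pser_spec hq v hv)
      (fun v hv => by rw [Pser]; simp only [ite_eq_right_iff, and_imp]; intro _ h; exact absurd h hv)
      N]
    show _ = PowerSeries.coeff N (conv (Wq q) _ _)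
    rw [conv, PowerSeries.coeff_mk]
    apply Finset.sum_congr rfl
    intro m hm
    rw [ih (N - m), coeff_geomF]

/-- equality of coefficients on "good" (digit-like) vectors -/
def MvEqv (q : ℕ) (f g : MvPowerSeries ℕ ℝ) : Prop :=
  ∀ v : ℕ →₀ ℕ, (∀ i, v i < q) → f v = g v

lemma MvEqv.mul_left {q : ℕ} {g g' : MvPowerSeries ℕ ℝ} (h : MvEqv q g g')
    (f : MvPowerSeries ℕ ℝ) : MvEqv q (f * g) (f * g') := by
  intro v hv
  show MvPowerSeries.coeff v (f * g) = MvPowerSeries.coeff v (f * g')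
  rw [MvPowerSeries.coeff_mul, MvPowerSeries.coeff_mul]
  apply Finset.sum_congr rfl
  intro p hp
  rw [Finset.HasAntidiagonal.mem_antidiagonal] at hp
  have hg : ∀ i, p.2 i < q := by
    intro i
    have : p.1 i + p.2 i = v i := by rw [← Finsupp.add_apply, hp]
    have := hv i
    omega
  simp only [coeff_eq]
  rw [h p.2 hg]

/-- indicator finsupp of a finset -/
noncomputable def indf (T : Finset ℕ) : ℕ →₀ ℕ := Finsupp.indicator T (fun _ _ => 1)

lemma indf_apply (T : Finset ℕ) (i : ℕ) : indf T i = if i ∈ T then 1 else 0 := by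
  rw [indf, Finsupp.indicator_apply]
  split <;> simp_all

lemma wt_indf (T : Finset ℕ) : wt (indf T) = T.card := by
  rw [wt, Finsupp.sum_of_support_subset (indf T) (fun i hi => by
    have := Finsupp.support_indicator_subset T (fun _ _ => (1:ℕ)) (by exact_mod_cast hi); exact_mod_cast this) _ (fun i _ => rfl)]
  rw [Finset.card_eq_sum_ones]
  apply Finset.sum_congr rfl
  intro i hi
  rw [indf_apply, if_pos hi]

/-- the powerset alternating sum -/
lemma powerset_sum (S : Finset ℕ) (c : ℝ) :
    ∑ T ∈ S.powerset, (c - (T.card : ℝ)) * (-1 : ℝ) ^ T.card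
      = if S = ∅ then c else if S.card = 1 then 1 else 0 := by
  induction S using Finset.induction generalizing c with
  | empty => simp
  | @insert a S ha ih =>
    rw [Finset.sum_powerset_insert ha]
    have h2 : ∀ T ∈ S.powerset, (c - ((insert a T).card : ℝ)) * (-1:ℝ) ^ (insert a T).card
        = -(((c-1) - (T.card : ℝ)) * (-1:ℝ) ^ T.card) := by
      intro T hT
      rw [Finset.mem_powerset] at hT
      have haT : a ∉ T := fun h => ha (hT h)
      rw [Finset.card_insert_of_notMem haT]
      push_cast
      ring
    rw [Finset.sum_congr rfl h2, Finset.sum_neg_distrib]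
    rw [ih c, ih (c-1)]
    by_cases hS : S = ∅
    · subst hS
      simp
    · have hc : 1 ≤ S.card := Nat.one_le_iff_ne_zero.mpr (by simpa [Finset.card_eq_zero] using hS)
      have hins : insert a S ≠ ∅ := by simp [Finset.insert_ne_empty]
      have hcard : (insert a S).card = S.card + 1 := Finset.card_insert_of_notMem ha
      rcases Nat.eq_or_lt_of_le hc with h1 | h1
      · simp [hS, ← h1, hins, hcard]
      · have : S.card ≠ 1 := by omega
        have : (insert a S).card ≠ 1 := by omega
        simp_all [hS, hins, hcard]

lemma indf_le {v : ℕ →₀ ℕ} {T : Finset ℕ} (hT : T ⊆ v.support) : indf T ≤ v := by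
  rw [Finsupp.le_def]
  intro i
  rw [indf_apply]
  split
  · rename_i h
    have := Finsupp.mem_support_iff.mp (hT h)
    omega
  · omega

lemma indf_support (T : Finset ℕ) : (indf T).support = T := by
  ext i
  rw [Finsupp.mem_support_iff, indf_apply]
  split <;> simp_all

lemma antidiag_indicator_sum (v : ℕ →₀ ℕ) (F : (ℕ →₀ ℕ) → (ℕ →₀ ℕ) → ℝ)
    (hF : ∀ p : (ℕ →₀ ℕ) × (ℕ →₀ ℕ), p ∈ Finset.HasAntidiagonal.antidiagonal v → ¬ (∀ i, p.2 i ≤ 1) → F p.1 p.2 = 0) :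
    ∑ p ∈ Finset.HasAntidiagonal.antidiagonal v, F p.1 p.2
      = ∑ T ∈ v.support.powerset, F (v - indf T) (indf T) := by
  rw [← Finset.sum_filter_add_sum_filter_not (Finset.HasAntidiagonal.antidiagonal v) (fun p => ∀ i, p.2 i ≤ 1)]
  have hz : ∑ p ∈ (Finset.HasAntidiagonal.antidiagonal v).filter (fun p => ¬ (∀ i, p.2 i ≤ 1)), F p.1 p.2 = 0 := by
    apply Finset.sum_eq_zero
    intro p hp
    rw [Finset.mem_filter] at hp
    exact hF p hp.1 hp.2
  rw [hz, add_zero]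
  symm
  apply Finset.sum_nbij' (i := fun T => (v - indf T, indf T)) (j := fun p => p.2.support)
  · intro T hT
    rw [Finset.mem_powerset] at hT
    rw [Finset.mem_filter, Finset.HasAntidiagonal.mem_antidiagonal]
    constructor
    · exact tsub_add_cancel_of_le (indf_le hT)
    · intro i; rw [indf_apply]; split <;> omega
  · intro p hp
    rw [Finset.mem_filter, Finset.HasAntidiagonal.mem_antidiagonal] at hp
    rw [Finset.mem_powerset]
    intro i hi
    rw [Finsupp.mem_support_iff] at hi ⊢
    have : p.1 i + p.2 i = v i := by rw [← Finsupp.add_apply, hp.1]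
    omega
  · intro T hT
    exact indf_support T
  · intro p hp
    rw [Finset.mem_filter, Finset.HasAntidiagonal.mem_antidiagonal] at hp
    have h2 : indf p.2.support = p.2 := by
      ext i
      rw [indf_apply]
      rcases eq_or_ne (p.2 i) 0 with h | h
      · rw [h]; split
        · rename_i hmem; exact absurd (Finsupp.mem_support_iff.mp hmem) (by simp [h])
        · rfl
      · have := hp.2 i
        have hmem : i ∈ p.2.support := Finsupp.mem_support_iff.mpr h
        rw [if_pos hmem]; omega
    have h1 : v - indf p.2.support = p.1 := by
      rw [h2]
      ext i
      rw [Finsupp.tsub_apply]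
      have : p.1 i + p.2 i = v i := by rw [← Finsupp.add_apply, hp.1]
      omega
    rw [Prod.ext_iff]
    exact ⟨h1, h2⟩
  · intro T hT
    rfl

lemma wt_sub_indf {v : ℕ →₀ ℕ} {T : Finset ℕ} (hT : T ⊆ v.support) :
    wt (v - indf T) + T.card = wt v := by
  have h := tsub_add_cancel_of_le (indf_le hT)
  have := wt_add (v - indf T) (indf T)
  rw [h] at this
  rw [← wt_indf T, this]

lemma Qser_indf (T : Finset ℕ) : Qser (indf T) = (-1 : ℝ) ^ T.card := by
  rw [Qser]
  rw [if_pos (fun i => by rw [indf_apply]; split <;> omega), wt_indf]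

/-- `(1+P) * Q` agrees with `1` on good vectors. -/
lemma QP_eqv (hq : 2 ≤ q) : MvEqv q ((1 + Pser q) * Qser) 1 := by
  intro v hv
  have hPQ : (Pser q * Qser) v = ∑ T ∈ v.support.powerset, Pser q (v - indf T) * Qser (indf T) := by
    rw [← coeff_eq (Pser q * Qser) v, MvPowerSeries.coeff_mul]
    simp only [coeff_eq]
    rw [antidiag_indicator_sum v (fun u w => Pser q u * Qser w)
      (fun p _ h => by show _ * Qser p.2 = 0; rw [Qser, if_neg h, mul_zero])]
  have hval : ∀ T ∈ v.support.powerset, Pser q (v - indf T) * Qser (indf T)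
      = (-1:ℝ) ^ T.card - (if v = indf T then (-1:ℝ) ^ T.card else 0) := by
    intro T hT
    rw [Finset.mem_powerset] at hT
    rw [Qser_indf, Pser]
    have hgood : ∀ i, (v - indf T) i < q := by
      intro i
      rw [Finsupp.tsub_apply]
      have := hv i
      omega
    by_cases h0 : v - indf T = 0
    · have hveq : v = indf T := by
        have := tsub_add_cancel_of_le (indf_le hT)
        rw [h0, zero_add] at this
        exact this.symm
      rw [if_neg (by simp [h0]), if_pos hveq]
      ring
    · have hvne : v ≠ indf T := by
        intro hveq
        apply h0
        rw [hveq, tsub_self]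
      rw [if_pos ⟨h0, hgood⟩, if_neg hvne]
      ring
  rw [show (1 + Pser q) * Qser = Qser + Pser q * Qser by ring]
  have hadd : (Qser + Pser q * Qser) v = Qser v + (Pser q * Qser) v := rfl
  have hone : (1 : MvPowerSeries ℕ ℝ) v = if v = 0 then 1 else 0 := by
    rw [← coeff_eq 1 v]; exact MvPowerSeries.coeff_one _ (R := ℝ)
  rw [hadd, hone]
  rw [hPQ, Finset.sum_congr rfl hval, Finset.sum_sub_distrib]
  have hps : ∑ T ∈ v.support.powerset, (-1:ℝ) ^ T.card = if v.support = ∅ then 1 else 0 := by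
    have h1 := powerset_sum v.support 1
    have h0 := powerset_sum v.support 0
    have hd : ∑ T ∈ v.support.powerset, (-1:ℝ) ^ T.card
        = ∑ T ∈ v.support.powerset, (((1:ℝ) - T.card) * (-1)^T.card - ((0:ℝ) - T.card) * (-1)^T.card) := by
      apply Finset.sum_congr rfl
      intro T _
      ring
    rw [hd, Finset.sum_sub_distrib, h1, h0]
    by_cases h : v.support = ∅
    · simp [h]
    · by_cases h2 : v.support.card = 1 <;> simp [h, h2]
  rw [hps]
  have hsingle : ∑ T ∈ v.support.powerset, (if v = indf T then (-1:ℝ) ^ T.card else 0) = Qser v := by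
    rw [Finset.sum_eq_single v.support]
    · rw [Qser]
      by_cases hle : ∀ i, v i ≤ 1
      · have hveq : v = indf v.support := by
          ext i
          rw [indf_apply]
          rcases eq_or_ne (v i) 0 with h | h
          · rw [h]; split
            · rename_i hm; exact absurd (Finsupp.mem_support_iff.mp hm) (by simp [h])
            · rfl
          · rw [if_pos (Finsupp.mem_support_iff.mpr h)]
            have := hle i; omega
        rw [if_pos hveq, if_pos hle]
        congr 1
        rw [← wt_indf, ← hveq]
      · have : v ≠ indf v.support := by
          intro hveq
          apply hle
          intro i
          rw [hveq, indf_apply]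
          split <;> omega
        rw [if_neg this, if_neg hle]
    · intro T hT hne
      rw [Finset.mem_powerset] at hT
      rw [if_neg]
      intro hveq
      apply hne
      rw [hveq, indf_support]
    · intro h
      exact absurd (Finset.mem_powerset_self _) h
  rw [hsingle]
  have hv0 : v.support = ∅ ↔ v = 0 := Finsupp.support_eq_empty
  by_cases h0 : v = 0
  · subst h0
    simp [Qser, wt, Finsupp.sum_zero_index]
  · rw [if_neg (fun h => h0 (hv0.mp h)), if_neg h0]
    ring

/-- the key explicit computation of `Dmv P * Q` on good vectors -/
lemma DPQ (hq : 2 ≤ q) (v : ℕ →₀ ℕ) (hv : ∀ i, v i < q) :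
    (Dmv (Pser q) * Qser) v = if v.support.card = 1 then 1 else 0 := by
  have h1 : (Dmv (Pser q) * Qser) v
      = ∑ T ∈ v.support.powerset, Dmv (Pser q) (v - indf T) * Qser (indf T) := by
    rw [← coeff_eq (Dmv (Pser q) * Qser) v, MvPowerSeries.coeff_mul]
    simp only [coeff_eq]
    rw [antidiag_indicator_sum v (fun u w => Dmv (Pser q) u * Qser w)
      (fun p _ h => by show _ * Qser p.2 = 0; rw [Qser, if_neg h, mul_zero])]
  have hval : ∀ T ∈ v.support.powerset, Dmv (Pser q) (v - indf T) * Qser (indf T)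
      = ((wt v : ℝ) - (T.card : ℝ)) * (-1:ℝ) ^ T.card := by
    intro T hT
    rw [Finset.mem_powerset] at hT
    have hwt := wt_sub_indf hT
    have hgood : ∀ i, (v - indf T) i < q := by
      intro i
      rw [Finsupp.tsub_apply]
      have := hv i
      omega
    rw [Qser_indf, Dmv, Pser]
    by_cases h0 : v - indf T = 0
    · rw [h0]
      have : wt (0 : ℕ →₀ ℕ) = 0 := by rw [wt, Finsupp.sum_zero_index]
      rw [this]
      have : (wt v : ℝ) - (T.card : ℝ) = 0 := by
        rw [h0] at hwt
        rw [this] at hwt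
        simp at hwt ⊢
        rw [hwt]
        push_cast
        ring
      rw [this]
      simp
    · rw [if_pos ⟨h0, hgood⟩, mul_one]
      congr 1
      have : (wt (v - indf T) : ℝ) = (wt v : ℝ) - (T.card : ℝ) := by
        push_cast [← hwt]
        ring
      rw [this]
  rw [h1, Finset.sum_congr rfl hval, powerset_sum]
  by_cases h0 : v.support = ∅
  · have hv0 : v = 0 := Finsupp.support_eq_empty.mp h0
    rw [if_pos h0, hv0]
    have : wt (0 : ℕ →₀ ℕ) = 0 := by rw [wt, Finsupp.sum_zero_index]
    rw [this, if_neg (by simp [h0])]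
    simp
  · rw [if_neg h0]

lemma Pser_order (hq : 2 ≤ q) : ∀ u : ℕ →₀ ℕ, wt u < 1 → Pser q u = 0 := by
  intro u hu
  have : u = 0 := wt_eq_zero (by omega)
  subst this
  simp [Pser]

lemma main_id (hq : 2 ≤ q) (N : ℕ) :
    (wt (dvec q N) : ℝ) * ∑ n ∈ Finset.Icc 1 N, ((-1:ℝ)^(n-1)/(n:ℝ)) * (Pser q ^ n) (dvec q N)
      = if (dvec q N).support.card = 1 then 1 else 0 := by
  set v := dvec q N with hvdef
  have hv : ∀ i, v i < q := fun i => dg_lt hq N i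
  have hwtv : wt v ≤ N := by
    have h1 := wt_le_sval hq v
    have h2 : sval q v = N := sval_dvec hq N
    omega
  set P := Pser q with hP
  have step1 : (wt v : ℝ) * ∑ n ∈ Finset.Icc 1 N, ((-1:ℝ)^(n-1)/(n:ℝ)) * (P ^ n) v
      = ∑ n ∈ Finset.Icc 1 N, (-1:ℝ)^(n-1) * ((Dmv P * P ^ (n-1)) v) := by
    rw [Finset.mul_sum]
    apply Finset.sum_congr rfl
    intro n hn
    rw [Finset.mem_Icc] at hn
    have hn1 : 1 ≤ n := hn.1
    have hdp : Dmv (P ^ n) = ((n:ℕ):ℝ) • (Dmv P * P ^ (n-1)) := by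
      have := Dmv_pow P (n-1)
      rw [show n - 1 + 1 = n by omega] at this
      exact this
    have h1 : (wt v : ℝ) * (P ^ n) v = Dmv (P ^ n) v := rfl
    have h2 : Dmv (P ^ n) v = ((n:ℕ):ℝ) * ((Dmv P * P ^ (n-1)) v) := by rw [hdp]; rfl
    have hne : ((n:ℕ):ℝ) ≠ 0 := by positivity
    calc (wt v : ℝ) * ((-1:ℝ)^(n-1)/(n:ℝ) * (P ^ n) v)
        = ((-1:ℝ)^(n-1)/(n:ℝ)) * ((wt v : ℝ) * (P ^ n) v) := by ring
      _ = ((-1:ℝ)^(n-1)/(n:ℝ)) * (((n:ℕ):ℝ) * ((Dmv P * P ^ (n-1)) v)) := by rw [h1, h2]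
      _ = (-1:ℝ)^(n-1) * ((Dmv P * P ^ (n-1)) v) := by field_simp
  have step2 : ∑ n ∈ Finset.Icc 1 N, (-1:ℝ)^(n-1) * ((Dmv P * P ^ (n-1)) v)
      = ∑ m ∈ Finset.range N, (-1:ℝ)^m * ((Dmv P * P ^ m) v) := by
    apply Finset.sum_nbij' (i := fun n => n - 1) (j := fun m => m + 1)
    · intro n hn; rw [Finset.mem_Icc] at hn; rw [Finset.mem_range]; omega
    · intro m hm; rw [Finset.mem_range] at hm; rw [Finset.mem_Icc]; omega
    · intro n hn; rw [Finset.mem_Icc] at hn; omega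
    · intro m hm; omega
    · intro n hn; rfl
  set Tser : MvPowerSeries ℕ ℝ := ∑ m ∈ Finset.range N, (-P) ^ m with hT
  have step3 : ∑ m ∈ Finset.range N, (-1:ℝ)^m * ((Dmv P * P ^ m) v) = (Dmv P * Tser) v := by
    have h1 : Dmv P * Tser = ∑ m ∈ Finset.range N, Dmv P * (-P) ^ m := by
      rw [hT, Finset.mul_sum]
    have h2 : ∀ m, Dmv P * (-P) ^ m = (-1:ℝ)^m • (Dmv P * P ^ m) := by
      intro m
      rw [show -P = (-1:ℝ) • P from (neg_one_smul ℝ P).symm, smul_pow, mul_smul_comm]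
    have h3 : (Dmv P * Tser) v = MvPowerSeries.coeff v (Dmv P * Tser) := rfl
    rw [h3, h1, map_sum]
    apply Finset.sum_congr rfl
    intro m _
    rw [h2 m, map_smul]
    rfl
  have htg : Tser * (1 + P) = 1 - (-P) ^ N := by
    have hg := geom_sum_mul (-P) N
    rw [hT]
    linear_combination -hg
  have heqv : MvEqv q (Dmv P * Tser) (Dmv P * ((1 - (-P) ^ N) * Qser)) := by
    apply MvEqv.mul_left
    intro w hw
    have e1 := (QP_eqv hq).mul_left Tser w hw
    rw [mul_one, ← mul_assoc, htg] at e1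
    exact e1.symm
  have step4 : (Dmv P * Tser) v = (Dmv P * Qser) v - (Dmv P * ((-P) ^ N * Qser)) v := by
    rw [heqv v hv]
    have hring : Dmv P * ((1 - (-P) ^ N) * Qser)
        = Dmv P * Qser - Dmv P * ((-P) ^ N * Qser) := by ring
    rw [hring]
    rfl
  have step5 : (Dmv P * ((-P) ^ N * Qser)) v = 0 := by
    apply mul_vanish (a := 1) (b := N)
    · intro u hu
      have : u = 0 := wt_eq_zero (by omega)
      subst this
      show (wt (0:ℕ→₀ℕ) : ℝ) * P 0 = 0
      rw [show wt (0:ℕ→₀ℕ) = 0 from by rw [wt, Finsupp.sum_zero_index]]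
      simp
    · intro w hw
      have := mul_vanish (f := (-P)^N) (g := Qser) (a := N) (b := 0)
        (pow_vanish (f := -P) (fun u hu => by
          have hpu : (-P) u = - MvPowerSeries.coeff u P := by
            rw [← coeff_eq (-P) u, map_neg]
          rw [hpu, coeff_eq, hP, Pser_order hq u hu, neg_zero]) N)
        (fun w hw => by omega) w (by omega)
      exact this
    · omega
  rw [step1, step2, step3, step4, step5, sub_zero]
  exact DPQ hq v hv


lemma Lval (hq : 2 ≤ q) (N : ℕ) :
    PowerSeries.coeff N (convLog (Wq q) (PowerSeries.mk fun _ => (1:ℝ)))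
      = ∑ n ∈ Finset.Icc 1 N, ((-1:ℝ)^(n-1)/(n:ℝ)) * (Pser q ^ n) (dvec q N) := by
  rw [convLog, PowerSeries.coeff_mk]
  apply Finset.sum_congr rfl
  intro n _
  rw [powEq hq n N]

theorem stmt10_aux (hq : 2 ≤ q) :
    (∀ n k : ℕ, 1 ≤ n → n < q →
      PowerSeries.coeff (n * q ^ k) (convLog (Wq q) (PowerSeries.mk fun _ => (1 : ℝ))) = 1 / n) ∧
    (∀ N : ℕ, (¬ ∃ n k : ℕ, 1 ≤ n ∧ n < q ∧ N = n * q ^ k) →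
      PowerSeries.coeff N (convLog (Wq q) (PowerSeries.mk fun _ => (1 : ℝ))) = 0) := by
  constructor
  · intro n k hn1 hnq
    have hgood : ∀ i, (Finsupp.single k n) i < q := by
      intro i
      rw [Finsupp.single_apply]
      split <;> omega
    have hs : sval q (Finsupp.single k n) = n * q ^ k := by
      rw [sval, Finsupp.sum_single_index]
      simp
    have hd : dvec q (n * q ^ k) = Finsupp.single k n := by
      rw [← hs, dvec_sval hq _ hgood]
    have hwt : wt (dvec q (n * q ^ k)) = n := by
      rw [hd, wt, Finsupp.sum_single_index]
      rfl
    have hcard : (dvec q (n * q ^ k)).support.card = 1 := by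
      rw [hd, Finsupp.support_single_ne_zero k (by omega : n ≠ 0)]
      simp
    have hmain := main_id hq (n * q ^ k)
    rw [hwt, if_pos hcard] at hmain
    rw [Lval hq]
    have hne : ((n:ℕ):ℝ) ≠ 0 := by positivity
    rw [eq_div_iff hne, mul_comm]
    exact hmain
  · intro N hN
    rcases Nat.eq_zero_or_pos N with h0 | h0
    · subst h0
      rw [Lval hq]
      simp
    · have hcard : (dvec q N).support.card ≠ 1 := by
        intro h1
        obtain ⟨a, ha, hfe⟩ := Finsupp.card_support_eq_one.mp h1
        apply hN
        refine ⟨dvec q N a, a, ?_, dg_lt hq N a, ?_⟩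
        · have := Finsupp.mem_support_iff.mpr ha
          omega
        · have hsv := sval_dvec hq N
          rw [hfe] at hsv
          rw [sval, Finsupp.sum_single_index] at hsv
          · exact hsv.symm
          · simp
      have hwt0 : wt (dvec q N) ≠ 0 := by
        intro hw
        have := wt_eq_zero hw
        have hsv := sval_dvec hq N
        rw [this] at hsv
        rw [sval, Finsupp.sum_zero_index] at hsv
        omega
      have hmain := main_id hq N
      rw [if_neg hcard] at hmain
      rw [Lval hq]
      have hne : ((wt (dvec q N) : ℕ):ℝ) ≠ 0 := by
        simpa using hwt0
      rcases mul_eq_zero.mp hmain with h | h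
      · exact absurd h hne
      · exact h


/-- For the geometric series `g = Σ x^n`, the `∘`-logarithm for the `P_{[0,q]}`-convolution
is `log_∘ g = Σ_{k≥0} Σ_{n=1}^{q−1} x^{n·q^k}/n`. -/
theorem stmt10 (q : ℕ) (hq : 2 ≤ q) :
    (∀ n k : ℕ, 1 ≤ n → n < q →
      coeff (n * q ^ k) (convLog (Wq q) (PowerSeries.mk fun _ => (1 : ℝ))) = 1 / n) ∧
    (∀ N : ℕ, (¬ ∃ n k : ℕ, 1 ≤ n ∧ n < q ∧ N = n * q ^ k) →
      coeff N (convLog (Wq q) (PowerSeries.mk fun _ => (1 : ℝ))) = 0) := stmt10_aux hq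
end

section
/- Let q ≥ 2 be an integer and take the weight w = w_q (the case S = {q}, c ≡ 1 of zero generalized Pascal weights, so w(n,m) = 1 if n mod q ≥ m mod q, else 0). For i = 1,2,3,4 let η_i be real formal power series with (η_i)_N = 0 whenever N mod q < q − ⌊q/2⌋, and set w_i = 1 + η_i. Then M(w_1,w_2)·M(w_3,w_4) = M(1+η_1+η_3, 1+η_2+η_4) = M(w_3,w_4)·M(w_1,w_2); in particular these matrices form a commutative subgroup of the group of matrices M(b,a). -/
open PowerSeries Finset

/-- The `P_{0,q}` weight: `w_q(n,m) = 1` if `n % q ≥ m % q`, else `0`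
(the case `S = {q}`, `c ≡ 1` of zero generalized Pascal weights). -/
noncomputable def wq (q n m : ℕ) : ℝ := if m % q ≤ n % q then 1 else 0

/-- The lower triangular matrix `M(b,a)` with entries `M(b,a)_{n,m} = [x^n](b ∘ x^m ∘ a^{(m)})`. -/
noncomputable def Mmat (w : ℕ → ℕ → ℝ) (b a : PowerSeries ℝ) : ℕ → ℕ → ℝ :=
  fun n m => coeff n (conv w b (conv w ((X : PowerSeries ℝ) ^ m) (convPow w a m)))

/-- Product of lower triangular `ℕ×ℕ` matrices (an entrywise finite sum). -/
noncomputable def matMul (A B : ℕ → ℕ → ℝ) : ℕ → ℕ → ℝ :=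
  fun n m => ∑ k ∈ Finset.range (n + 1), A n k * B k m

/- ### auxiliary lemmas -/

lemma coeff_conv (w : ℕ → ℕ → ℝ) (a b : PowerSeries ℝ) (n : ℕ) :
    coeff n (conv w a b) = ∑ m ∈ range (n + 1), w n m * coeff m a * coeff (n - m) b := by
  simp [conv, coeff_mk]

lemma mod_cases (q m n : ℕ) (hq : 0 < q) (hmn : m ≤ n) :
    (n - m) % q = n % q - m % q ∧ m % q ≤ n % q ∨
    (n - m) % q = n % q + q - m % q ∧ n % q < m % q := by
  have key : (n - m + m) % q = n % q := by rw [Nat.sub_add_cancel hmn]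
  rw [Nat.add_mod] at key
  have hu : (n - m) % q < q := Nat.mod_lt _ hq
  have hs : m % q < q := Nat.mod_lt _ hq
  have hr : n % q < q := Nat.mod_lt _ hq
  set u := (n - m) % q with hu'
  set s := m % q with hs'
  set r := n % q with hr'
  have h2 : q * ((u + s) / q) + (u + s) % q = u + s := Nat.div_add_mod _ _
  have hd : (u + s) / q < 2 := by rw [Nat.div_lt_iff_lt_mul hq]; omega
  set d := (u + s) / q with hd'
  set v := (u + s) % q with hv'
  interval_cases d <;> omega

lemma mod_sub_of_le {q m n : ℕ} (hq : 0 < q) (hmn : m ≤ n) (h : m % q ≤ n % q) :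
    (n - m) % q = n % q - m % q := by
  rcases mod_cases q m n hq hmn with ⟨h1, h2⟩ | ⟨h1, h2⟩ <;> omega

lemma wq_self (q n : ℕ) : wq q n n = 1 := by simp [wq]

lemma wq_symm {q n m : ℕ} (hq : 0 < q) (h : m ≤ n) : wq q n (n - m) = wq q n m := by
  unfold wq
  have hs : m % q < q := Nat.mod_lt _ hq
  rcases mod_cases q m n hq h with ⟨h1, h2⟩ | ⟨h1, h2⟩
  · rw [h1, if_pos (by omega), if_pos h2]
  · rw [h1, if_neg (by omega), if_neg (by omega)]

lemma core (q : ℕ) (hq : 2 ≤ q) {η η' : PowerSeries ℝ}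
    (hη : ∀ N : ℕ, N % q < q - q / 2 → coeff N η = 0)
    (hη' : ∀ N : ℕ, N % q < q - q / 2 → coeff N η' = 0)
    {a b : ℕ} (hab : a % q + b % q < q) :
    coeff a η * coeff b η' = 0 := by
  rcases lt_or_ge (a % q) (q - q / 2) with h | h
  · rw [hη a h, zero_mul]
  · rw [hη' b (by omega), mul_zero]

lemma coeff_zero_supp (q : ℕ) (hq : 2 ≤ q) {η : PowerSeries ℝ}
    (hη : ∀ N : ℕ, N % q < q - q / 2 → coeff N η = 0) : coeff 0 η = 0 :=
  hη 0 (by rw [Nat.zero_mod]; omega)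

lemma vanish_U1 (q : ℕ) (hq : 2 ≤ q) {η η' : PowerSeries ℝ}
    (hη : ∀ N : ℕ, N % q < q - q / 2 → coeff N η = 0)
    (hη' : ∀ N : ℕ, N % q < q - q / 2 → coeff N η' = 0)
    {n m : ℕ} (hm : m ≤ n) :
    wq q n m * (coeff m η * coeff (n - m) η') = 0 := by
  unfold wq
  split_ifs with h
  · rw [core q hq hη hη' ?_, mul_zero]
    have h1 := mod_sub_of_le (by omega : 0 < q) hm h
    have : n % q < q := Nat.mod_lt _ (by omega)
    omega
  · rw [zero_mul]

lemma vanish_U2 (q : ℕ) (hq : 2 ≤ q) {η η' : PowerSeries ℝ}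
    (hη : ∀ N : ℕ, N % q < q - q / 2 → coeff N η = 0)
    (hη' : ∀ N : ℕ, N % q < q - q / 2 → coeff N η' = 0)
    {n j m : ℕ} (hj : j ≤ n) (hm : m ≤ n - j) :
    wq q n j * wq q (n - j) m * (coeff j η * coeff (n - j - m) η') = 0 := by
  unfold wq
  split_ifs with h1 h2
  · rw [core q hq hη hη' ?_, mul_zero]
    have ha := mod_sub_of_le (by omega : 0 < q) hj h1
    have hb := mod_sub_of_le (by omega : 0 < q) hm h2
    have : n % q < q := Nat.mod_lt _ (by omega)
    omega
  all_goals simp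

lemma vanish_U3 (q : ℕ) (hq : 2 ≤ q) {η η' : PowerSeries ℝ}
    (hη : ∀ N : ℕ, N % q < q - q / 2 → coeff N η = 0)
    (hη' : ∀ N : ℕ, N % q < q - q / 2 → coeff N η' = 0)
    {n k m : ℕ} (hk : k ≤ n) :
    wq q n k * wq q k m * (coeff (n - k) η * coeff (k - m) η') = 0 := by
  unfold wq
  split_ifs with h1 h2
  · by_cases hm : m ≤ k
    · rw [core q hq hη hη' ?_, mul_zero]
      have ha := mod_sub_of_le (by omega : 0 < q) hk h1
      have hb := mod_sub_of_le (by omega : 0 < q) hm h2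
      have : n % q < q := Nat.mod_lt _ (by omega)
      omega
    · rw [Nat.sub_eq_zero_of_le (le_of_not_ge hm), coeff_zero_supp q hq hη',
        mul_zero, mul_zero]
  all_goals simp

lemma conv_one_left (q : ℕ) (f : PowerSeries ℝ) : conv (wq q) 1 f = f := by
  ext n
  rw [coeff_conv, Finset.sum_eq_single 0]
  · simp [wq]
  · intro j hj hj0
    rw [coeff_one, if_neg hj0]; ring
  · intro h; exact absurd (mem_range.2 (Nat.succ_pos n)) h

lemma conv_one_right (q : ℕ) (f : PowerSeries ℝ) : conv (wq q) f 1 = f := by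
  ext n
  rw [coeff_conv, Finset.sum_eq_single n]
  · simp [wq]
  · intro j hj hjn
    have hj' : j < n := lt_of_le_of_ne (Nat.lt_succ_iff.mp (mem_range.mp hj)) hjn
    rw [coeff_one, if_neg (by omega)]; ring
  · intro h; exact absurd (mem_range.2 (Nat.lt_succ_self n)) h

lemma conv_add_left (w : ℕ → ℕ → ℝ) (a b f : PowerSeries ℝ) :
    conv w (a + b) f = conv w a f + conv w b f := by
  ext n
  rw [map_add, coeff_conv, coeff_conv, coeff_conv, ← Finset.sum_add_distrib]
  refine Finset.sum_congr rfl fun j _ => ?_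
  rw [map_add]; ring

lemma conv_add_right (w : ℕ → ℕ → ℝ) (a b f : PowerSeries ℝ) :
    conv w f (a + b) = conv w f a + conv w f b := by
  ext n
  rw [map_add, coeff_conv, coeff_conv, coeff_conv, ← Finset.sum_add_distrib]
  refine Finset.sum_congr rfl fun j _ => ?_
  rw [map_add]; ring

lemma conv_smul_right (w : ℕ → ℕ → ℝ) (r : ℝ) (a f : PowerSeries ℝ) :
    conv w f (r • a) = r • conv w f a := by
  ext n
  rw [coeff_conv, map_smul, coeff_conv, smul_eq_mul, Finset.mul_sum]
  refine Finset.sum_congr rfl fun j _ => ?_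
  rw [map_smul, smul_eq_mul]; ring

lemma conv_eta (q : ℕ) (hq : 2 ≤ q) {η η' : PowerSeries ℝ}
    (hη : ∀ N : ℕ, N % q < q - q / 2 → coeff N η = 0)
    (hη' : ∀ N : ℕ, N % q < q - q / 2 → coeff N η' = 0) :
    conv (wq q) η η' = 0 := by
  ext n
  rw [coeff_conv, map_zero]
  refine Finset.sum_eq_zero fun m hm => ?_
  have := vanish_U1 q hq hη hη' (Nat.lt_succ_iff.mp (mem_range.mp hm))
  rw [mul_assoc]; exact this

lemma convPow_eq (q : ℕ) (hq : 2 ≤ q) {η' : PowerSeries ℝ}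
    (hη' : ∀ N : ℕ, N % q < q - q / 2 → coeff N η' = 0) (m : ℕ) :
    convPow (wq q) (1 + η') m = 1 + (m : ℝ) • η' := by
  induction m with
  | zero => simp [convPow]
  | succ k ih =>
    rw [convPow, ih, conv_add_left, conv_add_right, conv_add_right, conv_one_left,
      conv_one_left, conv_one_right, conv_smul_right, conv_eta q hq hη' hη']
    push_cast
    rw [add_smul, one_smul, smul_zero]
    ring

lemma coeff_conv_X_pow (q : ℕ) (m : ℕ) (f : PowerSeries ℝ) (n : ℕ) :
    coeff n (conv (wq q) ((X : PowerSeries ℝ) ^ m) f) =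
      if m ≤ n then wq q n m * coeff (n - m) f else 0 := by
  rw [coeff_conv]
  have h : ∀ j ∈ range (n + 1),
      wq q n j * coeff j ((X : PowerSeries ℝ) ^ m) * coeff (n - j) f =
      if j = m then wq q n m * coeff (n - m) f else 0 := by
    intro j _
    rw [coeff_X_pow]
    split_ifs with h
    · subst h; ring
    · ring
  rw [Finset.sum_congr rfl h, Finset.sum_ite_eq' (range (n + 1)) m]
  simp [Nat.lt_succ_iff]

lemma Mmat_eq (q : ℕ) (hq : 2 ≤ q) {η η' : PowerSeries ℝ}
    (hη : ∀ N : ℕ, N % q < q - q / 2 → coeff N η = 0)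
    (hη' : ∀ N : ℕ, N % q < q - q / 2 → coeff N η' = 0) (n m : ℕ) :
    Mmat (wq q) (1 + η) (1 + η') n m =
      wq q n m * ((if n = m then 1 else 0) + coeff (n - m) η + m * coeff (n - m) η') := by
  unfold Mmat
  rw [convPow_eq q hq hη' m, conv_add_left, conv_one_left, map_add]
  have hg : ∀ N : ℕ, coeff N (conv (wq q) ((X : PowerSeries ℝ) ^ m) (1 + (m : ℝ) • η')) =
      if m ≤ N then wq q N m * ((if N = m then 1 else 0) + m * coeff (N - m) η') else 0 := by
    intro N
    rw [coeff_conv_X_pow]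
    by_cases h : m ≤ N
    · rw [if_pos h, if_pos h, map_add, coeff_one, map_smul, smul_eq_mul]
      have he : (if N - m = 0 then (1 : ℝ) else 0) = (if N = m then 1 else 0) := by
        split_ifs <;> first | rfl | omega
      rw [he]
    · rw [if_neg h, if_neg h]
  rw [hg n, coeff_conv]
  by_cases hmn : m ≤ n
  · have hterm : ∀ j ∈ range (n + 1),
        wq q n j * coeff j η *
          coeff (n - j) (conv (wq q) ((X : PowerSeries ℝ) ^ m) (1 + (m : ℝ) • η')) =
        if n - m = j then wq q n m * coeff j η else 0 := by
      intro j hj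
      have hjn : j ≤ n := Nat.lt_succ_iff.mp (mem_range.mp hj)
      rw [hg (n - j)]
      by_cases h1 : m ≤ n - j
      · rw [if_pos h1]
        by_cases h2 : n - m = j
        · have hnj : n - j = m := by omega
          rw [hnj, if_pos rfl, if_pos h2, Nat.sub_self, coeff_zero_supp q hq hη', wq_self]
          have hj' : j = n - m := by omega
          rw [hj', wq_symm (by omega : 0 < q) hmn]
          ring
        · rw [if_neg (show ¬ n - j = m by omega), if_neg h2]
          have hv := vanish_U2 q hq hη hη' hjn h1
          linear_combination (m : ℝ) * hv
      · rw [if_neg h1, if_neg (show ¬ n - m = j by omega)]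
        ring
    rw [Finset.sum_congr rfl hterm, Finset.sum_ite_eq (range (n + 1)) (n - m)]
    rw [if_pos (mem_range.2 (by omega)), if_pos hmn]
    ring
  · have hterm : ∀ j ∈ range (n + 1),
        wq q n j * coeff j η *
          coeff (n - j) (conv (wq q) ((X : PowerSeries ℝ) ^ m) (1 + (m : ℝ) • η')) = 0 := by
      intro j hj
      have hjn : j ≤ n := Nat.lt_succ_iff.mp (mem_range.mp hj)
      rw [hg (n - j), if_neg (by omega), mul_zero]
    rw [Finset.sum_eq_zero hterm, if_neg hmn]
    have hz : n - m = 0 := by omega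
    rw [hz, coeff_zero_supp q hq hη, coeff_zero_supp q hq hη', if_neg (by omega)]
    ring

lemma prod_eq (q : ℕ) (hq : 2 ≤ q) (η₁ η₂ η₃ η₄ : PowerSeries ℝ)
    (h₁ : ∀ N : ℕ, N % q < q - q / 2 → coeff N η₁ = 0)
    (h₂ : ∀ N : ℕ, N % q < q - q / 2 → coeff N η₂ = 0)
    (h₃ : ∀ N : ℕ, N % q < q - q / 2 → coeff N η₃ = 0)
    (h₄ : ∀ N : ℕ, N % q < q - q / 2 → coeff N η₄ = 0) :
    matMul (Mmat (wq q) (1 + η₁) (1 + η₂)) (Mmat (wq q) (1 + η₃) (1 + η₄)) =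
      Mmat (wq q) (1 + η₁ + η₃) (1 + η₂ + η₄) := by
  have h13 : ∀ N : ℕ, N % q < q - q / 2 → coeff N (η₁ + η₃) = 0 := by
    intro N hN; rw [map_add, h₁ N hN, h₃ N hN, add_zero]
  have h24 : ∀ N : ℕ, N % q < q - q / 2 → coeff N (η₂ + η₄) = 0 := by
    intro N hN; rw [map_add, h₂ N hN, h₄ N hN, add_zero]
  funext n m
  unfold matMul
  have e13 : (1 : PowerSeries ℝ) + η₁ + η₃ = 1 + (η₁ + η₃) := by ring
  have e24 : (1 : PowerSeries ℝ) + η₂ + η₄ = 1 + (η₂ + η₄) := by ring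
  rw [e13, e24, Mmat_eq q hq h13 h24 n m]
  have hterm : ∀ k ∈ range (n + 1),
      Mmat (wq q) (1 + η₁) (1 + η₂) n k * Mmat (wq q) (1 + η₃) (1 + η₄) k m =
      (if n = k then
        wq q n m * ((if n = m then 1 else 0) + coeff (n - m) η₃ + m * coeff (n - m) η₄)
       else 0) +
      (if k = m then wq q n m * (coeff (n - m) η₁ + m * coeff (n - m) η₂) else 0) := by
    intro k hk
    have hkn : k ≤ n := Nat.lt_succ_iff.mp (mem_range.mp hk)
    rw [Mmat_eq q hq h₁ h₂ n k, Mmat_eq q hq h₃ h₄ k m]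
    have z1 := coeff_zero_supp q hq h₁
    have z2 := coeff_zero_supp q hq h₂
    have z3 := coeff_zero_supp q hq h₃
    have z4 := coeff_zero_supp q hq h₄
    by_cases e1 : n = k <;> by_cases e2 : k = m
    · subst e1; subst e2
      simp [wq_self, Nat.sub_self, z1, z2, z3, z4]
    · subst e1
      rw [if_neg e2, if_neg e2, Nat.sub_self, z1, z2, wq_self]
      simp
    · subst e2
      rw [if_neg e1, if_neg e1, Nat.sub_self, z3, z4, wq_self]
      simp
    · rw [if_neg e1, if_neg e1, if_neg e2, if_neg e2]
      have v13 := vanish_U3 q hq h₁ h₃ (m := m) hkn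
      have v14 := vanish_U3 q hq h₁ h₄ (m := m) hkn
      have v23 := vanish_U3 q hq h₂ h₃ (m := m) hkn
      have v24 := vanish_U3 q hq h₂ h₄ (m := m) hkn
      linear_combination v13 + (m : ℝ) * v14 + (k : ℝ) * v23 + (k : ℝ) * (m : ℝ) * v24
  rw [Finset.sum_congr rfl hterm, Finset.sum_add_distrib,
    Finset.sum_ite_eq (range (n + 1)) n, Finset.sum_ite_eq' (range (n + 1)) m,
    if_pos (mem_range.2 (Nat.lt_succ_self n))]
  have z1 := coeff_zero_supp q hq h₁
  have z2 := coeff_zero_supp q hq h₂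
  by_cases hmn : m ≤ n
  · rw [if_pos (mem_range.2 (by omega))]
    rw [map_add, map_add]
    ring
  · rw [if_neg (fun hc => hmn (Nat.lt_succ_iff.mp (mem_range.mp hc)))]
    have hz : n - m = 0 := by omega
    rw [hz, map_add, map_add, z1, z2, coeff_zero_supp q hq h₃, coeff_zero_supp q hq h₄,
      if_neg (by omega)]
    ring

/-- The matrices `M(1+η,1+η')`, with `η, η'` supported on residues
`N % q ≥ q − ⌊q/2⌋`, form a commutative subgroup:
`M(1+η₁,1+η₂)·M(1+η₃,1+η₄) = M(1+η₁+η₃, 1+η₂+η₄) = M(1+η₃,1+η₄)·M(1+η₁,1+η₂)`. -/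
theorem stmt14 (q : ℕ) (hq : 2 ≤ q) (η₁ η₂ η₃ η₄ : PowerSeries ℝ)
    (h₁ : ∀ N : ℕ, N % q < q - q / 2 → coeff N η₁ = 0)
    (h₂ : ∀ N : ℕ, N % q < q - q / 2 → coeff N η₂ = 0)
    (h₃ : ∀ N : ℕ, N % q < q - q / 2 → coeff N η₃ = 0)
    (h₄ : ∀ N : ℕ, N % q < q - q / 2 → coeff N η₄ = 0) :
    matMul (Mmat (wq q) (1 + η₁) (1 + η₂)) (Mmat (wq q) (1 + η₃) (1 + η₄)) =
        Mmat (wq q) (1 + η₁ + η₃) (1 + η₂ + η₄) ∧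
      matMul (Mmat (wq q) (1 + η₃) (1 + η₄)) (Mmat (wq q) (1 + η₁) (1 + η₂)) =
        Mmat (wq q) (1 + η₁ + η₃) (1 + η₂ + η₄) := by
  refine ⟨prod_eq q hq η₁ η₂ η₃ η₄ h₁ h₂ h₃ h₄, ?_⟩
  have := prod_eq q hq η₃ η₄ η₁ η₂ h₃ h₄ h₁ h₂
  rw [this]
  rw [show (1 : PowerSeries ℝ) + η₃ + η₁ = 1 + η₁ + η₃ by ring,
    show (1 : PowerSeries ℝ) + η₄ + η₂ = 1 + η₂ + η₄ by ring]
end
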